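/- For a finite set S of integers containing the integer n₀ nearest to a real x (with |x - n₀| < |x - n| for all other n ∈ S), the normalized smooth rounding round_norm(x,k) = (Σ_{n∈S} n·ρ_n(x)) / (Σ_{n∈S} ρ_n(x)) converges to n₀ as k → ∞. -/

import Mathlib

noncomputable def sigma (z : ℝ) : ℝ := 1 / (1 + Real.exp (-z))

noncomputable def rho (n : ℤ) (k x : ℝ) : ℝ :=
  k * sigma (k * (x - (n : ℝ))) * (1 - sigma (k * (x - (n : ℝ))))

lemma sigma_prod (z : ℝ) : sigma z * (1 - sigma z) = 1 / (4 * (Real.cosh (z/2))^2) := by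
  unfold sigma
  rw [Real.cosh_eq]
  have h1 : Real.exp (-z) = Real.exp (-(z/2)) * Real.exp (-(z/2)) := by
    rw [← Real.exp_add]; ring_nf
  have h2 : Real.exp (z/2) * Real.exp (-(z/2)) = 1 := by
    rw [← Real.exp_add]; simp
  have hp1 : (0:ℝ) < 1 + Real.exp (-z) := by positivity
  have hp2 : (0:ℝ) < Real.exp (z/2) + Real.exp (-(z/2)) := by positivity
  have h3 : Real.exp (-z/2) = Real.exp (-(z/2)) := by rw [neg_div]
  field_simp
  rw [h1]
  linear_combination (4*(Real.exp (z/2)*Real.exp (-(z/2)) + 2*Real.exp (-(z/2))^2 + 1)) * h2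

lemma cosh_le (t : ℝ) : Real.cosh t ≤ Real.exp |t| := by
  rw [Real.cosh_eq]
  have := Real.exp_le_exp.mpr (le_abs_self t)
  have := Real.exp_le_exp.mpr (neg_le_abs t)
  linarith

lemma le_cosh (t : ℝ) : Real.exp |t| / 2 ≤ Real.cosh t := by
  rw [Real.cosh_eq]
  rcases abs_cases t with ⟨h1, _⟩ | ⟨h1, _⟩ <;> rw [h1] <;>
    nlinarith [Real.exp_pos t, Real.exp_pos (-t)]

lemma ratio_tendsto (a b : ℝ) (hab : |a| < |b|) :
    Filter.Tendsto (fun k : ℝ => (Real.cosh (k*a/2))^2 / (Real.cosh (k*b/2))^2)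
      Filter.atTop (nhds 0) := by
  have hc : |a| - |b| < 0 := by linarith
  have hbound : Filter.Tendsto (fun k : ℝ => 4 * Real.exp (k*(|a|-|b|))) Filter.atTop (nhds 0) := by
    have h1 : Filter.Tendsto (fun k : ℝ => k*(|a|-|b|)) Filter.atTop Filter.atBot :=
      Filter.Tendsto.atTop_mul_const_of_neg hc Filter.tendsto_id
    have := (Real.tendsto_exp_atBot.comp h1).const_mul (4:ℝ)
    simpa using this
  apply squeeze_zero' ?_ ?_ hbound
  · filter_upwards with k
    positivity
  · filter_upwards [Filter.eventually_ge_atTop (0:ℝ)] with k hk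
    have ha1 : Real.cosh (k*a/2) ≤ Real.exp (k*|a|/2) := by
      have := cosh_le (k*a/2)
      have e : |k*a/2| ≤ k*|a|/2 := by
        rw [abs_div, abs_mul, abs_of_nonneg hk]
        simp
      exact this.trans (Real.exp_le_exp.mpr e)
    have hb1 : Real.exp (k*|b|/2) / 2 ≤ Real.cosh (k*b/2) := by
      have := le_cosh (k*b/2)
      have e : k*|b|/2 ≤ |k*b/2| := by
        rw [abs_div, abs_mul, abs_of_nonneg hk]
        simp
      exact (div_le_div_of_nonneg_right (Real.exp_le_exp.mpr e) (by norm_num : (0:ℝ) ≤ 2)).trans this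
      -- note direction
    have hA : Real.cosh (k*a/2)^2 ≤ Real.exp (k*|a|) := by
      have h0 : (0:ℝ) ≤ Real.cosh (k*a/2) := (Real.cosh_pos _).le
      calc Real.cosh (k*a/2)^2 ≤ Real.exp (k*|a|/2)^2 := by nlinarith [Real.exp_pos (k*|a|/2)]
        _ = Real.exp (k*|a|) := by rw [sq, ← Real.exp_add]; ring_nf
    have hB : Real.exp (k*|b|) / 4 ≤ Real.cosh (k*b/2)^2 := by
      have h0 : (0:ℝ) < Real.exp (k*|b|/2) / 2 := by positivity
      calc Real.exp (k*|b|) / 4 = (Real.exp (k*|b|/2)/2)^2 := by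
            rw [div_pow, sq, ← Real.exp_add]; ring_nf
        _ ≤ Real.cosh (k*b/2)^2 := by nlinarith
    have hBpos : (0:ℝ) < Real.exp (k*|b|) / 4 := by positivity
    calc Real.cosh (k*a/2)^2 / Real.cosh (k*b/2)^2
        ≤ Real.exp (k*|a|) / (Real.exp (k*|b|) / 4) :=
          div_le_div₀ (Real.exp_pos _).le hA hBpos hB
      _ = 4 * Real.exp (k*(|a|-|b|)) := by
          rw [div_div_eq_mul_div, mul_comm, mul_div_assoc, ← Real.exp_sub]
          ring_nf

theorem round_norm_tendsto (S : Finset ℤ) (hS : S.Nonempty) (x : ℝ) (n₀ : ℤ) (hn₀ : n₀ ∈ S)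
    (h : ∀ n ∈ S, n ≠ n₀ → |x - (n₀ : ℝ)| < |x - (n : ℝ)|) :
    Filter.Tendsto
      (fun k : ℝ => (∑ n ∈ S, (n : ℝ) * rho n k x) / (∑ n ∈ S, rho n k x))
      Filter.atTop (nhds (n₀ : ℝ)) := by
  set r : ℤ → ℝ → ℝ := fun n k =>
    (Real.cosh (k*(x-(n₀:ℝ))/2))^2 / (Real.cosh (k*(x-(n:ℝ))/2))^2 with hr
  have hrho : ∀ (n : ℤ) (k : ℝ), rho n k x = k * (1 / (4 * (Real.cosh (k*(x-(n:ℝ))/2))^2)) := by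
    intro n k
    unfold rho
    rw [mul_assoc, sigma_prod]
  have hrt : ∀ n ∈ S, Filter.Tendsto (fun k => r n k) Filter.atTop
      (nhds (if n = n₀ then 1 else 0)) := by
    intro n hn
    by_cases hne : n = n₀
    · subst hne
      simp only [if_pos rfl, hr]
      have : ∀ k : ℝ, (Real.cosh (k*(x-(n:ℝ))/2))^2 / (Real.cosh (k*(x-(n:ℝ))/2))^2 = 1 := by
        intro k
        exact div_self (by positivity)
      simp only [this]
      exact tendsto_const_nhds
    · simp only [if_neg hne, hr]
      exact ratio_tendsto _ _ (h n hn hne)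
  have hnum : Filter.Tendsto (fun k => ∑ n ∈ S, (n:ℝ) * r n k) Filter.atTop (nhds (n₀:ℝ)) := by
    have := tendsto_finset_sum S (fun n hn => ((hrt n hn).const_mul (n:ℝ)))
    have hv : (∑ n ∈ S, (n:ℝ) * (if n = n₀ then (1:ℝ) else 0)) = (n₀:ℝ) := by
      rw [Finset.sum_congr rfl (fun n _ => by rw [mul_ite, mul_one, mul_zero])]
      simp [Finset.sum_ite_eq', hn₀]
    rwa [hv] at this
  have hden : Filter.Tendsto (fun k => ∑ n ∈ S, r n k) Filter.atTop (nhds 1) := by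
    have := tendsto_finset_sum S (fun n hn => hrt n hn)
    have hv : (∑ n ∈ S, (if n = n₀ then (1:ℝ) else 0)) = 1 := by
      simp [Finset.sum_ite_eq', hn₀]
    rwa [hv] at this
  have hmain := hnum.div hden one_ne_zero
  rw [div_one] at hmain
  apply hmain.congr'
  filter_upwards [Filter.eventually_gt_atTop (0:ℝ)] with k hk
  simp only [Pi.div_apply]
  have hC : (0:ℝ) < k / (4 * (Real.cosh (k*(x-(n₀:ℝ))/2))^2) := by positivity
  have hterm : ∀ n : ℤ, rho n k x = (k / (4 * (Real.cosh (k*(x-(n₀:ℝ))/2))^2)) * r n k := by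
    intro n
    rw [hrho]
    simp only [hr]
    have h1 : (Real.cosh (k*(x-(n:ℝ))/2))^2 ≠ 0 := by positivity
    have h2 : (Real.cosh (k*(x-(n₀:ℝ))/2))^2 ≠ 0 := by positivity
    field_simp
  simp only [hterm]
  rw [show (∑ n ∈ S, (n:ℝ) * ((k / (4 * (Real.cosh (k*(x-(n₀:ℝ))/2))^2)) * r n k))
      = (k / (4 * (Real.cosh (k*(x-(n₀:ℝ))/2))^2)) * ∑ n ∈ S, (n:ℝ) * r n k by
    rw [Finset.mul_sum]; exact Finset.sum_congr rfl (fun n _ => by ring),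
    ← Finset.mul_sum, mul_div_mul_left _ _ hC.ne']
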